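/- Let (Γ,μ) be a weighted graph satisfying (p₀), (VC) and (TC). Then there is c>0 such that p_{2n}(x,x) ≥ c/V(x,e(x,2n)) for all x∈Γ and n≥1. -/

import Mathlib

open scoped BigOperators Classical

/-- A weighted graph: symmetric nonnegative edge weights on a (countably infinite,
connected) vertex set; `x ∼ y` iff `0 < w x y`. -/
structure WeightedGraph (V : Type*) where
  w : V → V → ℝ
  symm : ∀ x y, w x y = w y x
  nonneg : ∀ x y, 0 ≤ w x y
  summable' : ∀ x, Summable (w x)
  mu_pos : ∀ x, 0 < ∑' y, w x y
  connected : ∀ x y : V, Relation.ReflTransGen (fun a b => 0 < w a b) x y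

namespace WeightedGraph

variable {V : Type*}

/-- The vertex measure `μ(x) = Σ_{y∼x} μ_{xy}`. -/
noncomputable def mu (G : WeightedGraph V) (x : V) : ℝ := ∑' y, G.w x y

/-- Measure of a set of vertices. -/
noncomputable def muSet (G : WeightedGraph V) (A : Set V) : ℝ := ∑' y : A, G.mu y

/-- One-step transition probability `P(x,y) = μ_{xy}/μ(x)`. -/
noncomputable def P (G : WeightedGraph V) (x y : V) : ℝ := G.w x y / G.mu x

/-- `n`-step transition probabilities. -/
noncomputable def Pn (G : WeightedGraph V) : ℕ → V → V → ℝ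
  | 0, x, y => if x = y then 1 else 0
  | n + 1, x, y => ∑' z, G.P x z * G.Pn n z y

/-- The heat kernel `p_n(x,y) = P_n(x,y)/μ(y)`. -/
noncomputable def hk (G : WeightedGraph V) (n : ℕ) (x y : V) : ℝ := G.Pn n x y / G.mu y

/-- There is a walk of length `n` from `x` to `y`. -/
def walkLen (G : WeightedGraph V) : ℕ → V → V → Prop
  | 0, x, y => x = y
  | n + 1, x, y => ∃ z, 0 < G.w x z ∧ G.walkLen n z y

/-- The (shortest path) graph distance. -/
noncomputable def dist (G : WeightedGraph V) (x y : V) : ℕ := sInf {n | G.walkLen n x y}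

/-- Open ball `B(x,R)`. -/
def ball (G : WeightedGraph V) (x : V) (R : ℕ) : Set V := {y | G.dist x y < R}

/-- Closed ball `B̄(x,R)`. -/
def cball (G : WeightedGraph V) (x : V) (R : ℕ) : Set V := {y | G.dist x y ≤ R}

/-- Volume of a ball: `V(x,R) = μ(B(x,R))`. -/
noncomputable def vol (G : WeightedGraph V) (x : V) (R : ℕ) : ℝ := G.muSet (G.ball x R)

/-- `survive B n x` is the probability that the walk started at `x` stays inside `B`
during its first `n` steps, i.e. `P(T_B > n | X_0 = x)`. -/
noncomputable def survive (G : WeightedGraph V) (B : Set V) : ℕ → V → ℝ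
  | 0, x => if x ∈ B then 1 else 0
  | n + 1, x => if x ∈ B then ∑' y, G.P x y * G.survive B n y else 0

/-- Mean exit time `E(x,R) = E(T_{B(x,R)} | X_0 = x) = Σ_{n≥0} P(T > n)`. -/
noncomputable def meanExit (G : WeightedGraph V) (x : V) (R : ℕ) : ℝ :=
  ∑' n, G.survive (G.ball x R) n x

/-- Generalized inverse `e(x,n) = min {R ∈ ℕ : E(x,R) ≥ n}` of the mean exit time. -/
noncomputable def einv (G : WeightedGraph V) (x : V) (n : ℕ) : ℕ :=
  sInf {R : ℕ | (n : ℝ) ≤ G.meanExit x R}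

/-- Condition `(p₀)`. -/
def condP0 (G : WeightedGraph V) : Prop :=
  ∃ p₀ > (0 : ℝ), ∀ x y : V, 0 < G.w x y → p₀ ≤ G.w x y / G.mu x

/-- Volume comparison principle `(VC)`. -/
def condVC (G : WeightedGraph V) : Prop :=
  ∃ C > (1 : ℝ), ∀ (x : V) (R : ℕ), 0 < R → ∀ y ∈ G.ball x R,
    G.vol x (2 * R) ≤ C * G.vol y R

/-- Volume doubling `(VD)`. -/
def condVD (G : WeightedGraph V) : Prop :=
  ∃ D > (0 : ℝ), ∀ (x : V) (R : ℕ), 0 < R → G.vol x (2 * R) ≤ D * G.vol x R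

/-- Time comparison principle `(TC)`. -/
def condTC (G : WeightedGraph V) : Prop :=
  ∃ C > (1 : ℝ), ∀ (x : V) (R : ℕ), 0 < R → ∀ y ∈ G.ball x R,
    G.meanExit x (2 * R) ≤ C * G.meanExit y R

/-- Time doubling `(TD)`. -/
def condTD (G : WeightedGraph V) : Prop :=
  ∃ D > (0 : ℝ), ∀ (x : V) (R : ℕ), 0 < R → G.meanExit x (2 * R) ≤ D * G.meanExit x R

/-- Uniformity of the mean exit time `(E)`. -/
def condE (G : WeightedGraph V) : Prop :=
  ∃ C > (1 : ℝ), ∀ (x y : V) (R : ℕ), 0 < R → G.meanExit x R ≤ C * G.meanExit y R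

/-- `u` is harmonic on `B`: `Pu = u` on `B`. -/
def IsHarmonicOn (G : WeightedGraph V) (u : V → ℝ) (B : Set V) : Prop :=
  ∀ z ∈ B, (∑' y, G.P z y * u y) = u z

/-- Mean value inequality `(MV)`. -/
def condMV (G : WeightedGraph V) : Prop :=
  ∃ C > (0 : ℝ), ∀ (x : V) (R : ℕ), 0 < R → ∀ u : V → ℝ,
    (∀ y ∈ G.cball x R, 0 ≤ u y) → G.IsHarmonicOn u (G.ball x R) →
    u x ≤ C / G.vol x R * ∑' y : G.ball x R, u y * G.mu y

/-- Elliptic Harnack inequality `(H)`. -/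
def condH (G : WeightedGraph V) : Prop :=
  ∃ C > (0 : ℝ), ∀ (x : V) (R : ℕ), 0 < R → ∀ u : V → ℝ,
    (∀ y ∈ G.cball x (2 * R), 0 ≤ u y) → G.IsHarmonicOn u (G.ball x (2 * R)) →
    ∀ z ∈ G.ball x R, ∀ v ∈ G.ball x R, u z ≤ C * u v

/-- Skewed parabolic mean value inequality `(sPMV)`. -/
def condSPMV (G : WeightedGraph V) : Prop :=
  ∃ c₁ c₂ C : ℝ, 0 < c₁ ∧ c₁ < c₂ ∧ c₂ ≤ 1 ∧ 1 ≤ C ∧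
    ∀ (x : V) (R : ℕ), 0 < R → ∀ y ∈ G.ball x R, ∀ u : ℕ → V → ℝ,
      (∀ i ≤ ⌊c₂ * G.meanExit x R⌋₊, ∀ z ∈ G.ball x R, 0 ≤ u i z) →
      (∀ i : ℕ, i + 1 ≤ ⌊c₂ * G.meanExit x R⌋₊ → ∀ z ∈ G.ball x R,
        u (i + 1) z = ∑' v, G.P z v * u i v) →
      u ⌊c₂ * G.meanExit x R⌋₊ x ≤
        C / (G.vol y (2 * R) * G.meanExit y (2 * R)) *
          ∑ i ∈ Finset.Icc ⌈c₁ * G.meanExit x R⌉₊ ⌊c₂ * G.meanExit x R⌋₊,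
            ∑' z : G.ball x R, u i z * G.mu z

/-- The local diagonal upper estimate `P_n(x,x) ≤ C μ(x) / V(x,e(x,n))`. -/
def condLDUE (G : WeightedGraph V) : Prop :=
  ∃ C > (0 : ℝ), ∀ (x : V) (n : ℕ), 1 ≤ n →
    G.Pn n x x ≤ C * G.mu x / G.vol x (G.einv x n)

/-- The local kernel function `k_y(n,R)`: the maximal integer `1 ≤ k ≤ n` with
`n/k ≤ q E(y, ⌊R/k⌋)`, and `0` if there is no such `k`. -/
noncomputable def kker (G : WeightedGraph V) (q : ℝ) (y : V) (n R : ℕ) : ℕ :=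
  sSup {k : ℕ | 1 ≤ k ∧ k ≤ n ∧ (n : ℝ) / k ≤ q * G.meanExit y (R / k)}

/-- `k_C(x,n,R) = min_{z ∈ B(x,e(x,n))} k_z(Cn, R/C)`. -/
noncomputable def kC (G : WeightedGraph V) (q : ℝ) (Cc : ℕ) (x : V) (n R : ℕ) : ℕ :=
  sInf {m : ℕ | ∃ z ∈ G.ball x (G.einv x n), m = G.kker q z (Cc * n) (R / Cc)}

/-- `κ_C(n,x,y)`. -/
noncomputable def kappaC (G : WeightedGraph V) (q : ℝ) (Cc : ℕ) (n : ℕ) (x y : V) : ℕ :=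
  if 3 * (G.einv x n + G.einv y n) < G.dist x y then
    max (G.kC q Cc x n (G.dist x y)) (G.kC q Cc y n (G.dist x y))
  else 0

/-- The local upper estimate (LUE). -/
def condLUE (G : WeightedGraph V) : Prop :=
  ∃ q > (0 : ℝ), ∃ C > (0 : ℝ), ∃ c > (0 : ℝ), ∀ (x y : V) (n : ℕ), 1 ≤ n →
    G.hk n x y ≤
      C / Real.sqrt (G.vol x (G.einv x n) * G.vol y (G.einv y n)) *
        Real.exp (-c * (G.kappaC q 3 n x y : ℝ))

/-- `A_{x,y} = B(x,d(x,y)) ∪ B(y,d(x,y))`. -/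
def Axy (G : WeightedGraph V) (x y : V) : Set V :=
  G.ball x (G.dist x y) ∪ G.ball y (G.dist x y)

/-- `κ(n,x,y) = min_{z ∈ A_{x,y}} k_z(3n, d(x,y)/3)` if `d(x,y) > 3[e(x,n)+e(y,n)]`,
and `0` otherwise. -/
noncomputable def kappa (G : WeightedGraph V) (q : ℝ) (n : ℕ) (x y : V) : ℕ :=
  if 3 * (G.einv x n + G.einv y n) < G.dist x y then
    sInf {m : ℕ | ∃ z ∈ G.Axy x y, m = G.kker q z (3 * n) (G.dist x y / 3)}
  else 0

/-- `l(n,x,y) = max_{z ∈ A_{x,y}} k_z(n, d(x,y))`. -/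
noncomputable def lfun (G : WeightedGraph V) (q : ℝ) (n : ℕ) (x y : V) : ℕ :=
  sSup {m : ℕ | ∃ z ∈ G.Axy x y, m = G.kker q z n (G.dist x y)}

/-- Inhomogeneity of the mean exit time: `δ(n,A) = log max_{z,v∈A} e(z,n)/e(v,n)`. -/
noncomputable def deltaIn (G : WeightedGraph V) (n : ℕ) (A : Set V) : ℝ :=
  Real.log (sSup {r : ℝ | ∃ z ∈ A, ∃ v ∈ A, r = (G.einv z n : ℝ) / (G.einv v n)})

/-- The lower sub-Gaussian kernel `ν(n,x,y) = l(n,x,y)[1 + δ(n,A_{x,y})]`. -/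
noncomputable def nu (G : WeightedGraph V) (q : ℝ) (n : ℕ) (x y : V) : ℝ :=
  (G.lfun q n x y : ℝ) * (1 + G.deltaIn n (G.Axy x y))

/-- `F` is a space-time scale function satisfying `(ED_F)`. -/
def EDF (F : ℕ → ℝ) : Prop :=
  StrictMono F ∧ (∀ R, 0 < F R) ∧
    ∃ D > (0 : ℝ), ∃ β > (1 : ℝ), ∃ c > (0 : ℝ),
      (∀ R, F (2 * R) ≤ D * F R) ∧
      ∀ r R : ℕ, 1 ≤ r → r ≤ R → c * ((R : ℝ) / r) ^ β ≤ F R / F r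

/-- Generalized inverse `f = F⁻¹`. -/
noncomputable def finv (F : ℕ → ℝ) (n : ℕ) : ℕ := sInf {R : ℕ | (n : ℝ) ≤ F R}

/-- The kernel `k(n,R)` built from `F`: the maximal integer `1 ≤ k ≤ n` with
`n/k ≤ q F(⌊R/k⌋)`, and `0` if there is no such `k`. -/
noncomputable def kF (q : ℝ) (F : ℕ → ℝ) (n R : ℕ) : ℕ :=
  sSup {k : ℕ | 1 ≤ k ∧ k ≤ n ∧ (n : ℝ) / k ≤ q * F (R / k)}

/-- Sub-Gaussian upper estimate `(UE_F)`. -/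
def condUEF (G : WeightedGraph V) (F : ℕ → ℝ) : Prop :=
  ∃ q > (0 : ℝ), ∃ C > (0 : ℝ), ∃ c > (0 : ℝ), ∀ (x y : V) (n : ℕ), 1 ≤ n →
    G.Pn n x y ≤
      C * G.mu y / G.vol x (finv F n) * Real.exp (-c * (kF q F n (G.dist x y) : ℝ))

/-- Sub-Gaussian lower estimate `(LE_F)`. -/
def condLEF (G : WeightedGraph V) (F : ℕ → ℝ) : Prop :=
  ∃ q > (0 : ℝ), ∃ c > (0 : ℝ), ∃ C > (0 : ℝ), ∀ (x y : V) (n : ℕ), 1 ≤ n →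
    c * G.mu y / G.vol x (finv F n) * Real.exp (-C * (kF q F n (G.dist x y) : ℝ)) ≤
      G.Pn n x y + G.Pn (n + 1) x y

/-- `F`-parabolic Harnack inequality `(PH_F)`. -/
def condPHF (G : WeightedGraph V) (F : ℕ → ℝ) : Prop :=
  ∃ CH > (0 : ℝ), ∀ (x : V) (R k : ℕ), 0 < R → ∀ u : ℕ → V → ℝ,
    (∀ i : ℕ, k ≤ i → (i : ℝ) ≤ k + F (4 * R) → ∀ z ∈ G.ball x (2 * R), 0 ≤ u i z) →
    (∀ i : ℕ, k ≤ i → ((i : ℝ) + 1) ≤ k + F (4 * R) → ∀ z ∈ G.ball x (2 * R),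
      u (i + 1) z = ∑' v, G.P z v * u i v) →
    ∀ nm np : ℕ, ∀ xm ∈ G.ball x R, ∀ xp ∈ G.ball x R,
      (k : ℝ) + F R ≤ nm → (nm : ℝ) ≤ k + F (2 * R) →
      (k : ℝ) + F (3 * R) ≤ np → (np : ℝ) ≤ k + F (4 * R) →
      (G.dist xm xp : ℝ) ≤ (np : ℝ) - nm →
      u nm xm ≤ CH * (u np xp + u (np + 1) xp)

end WeightedGraph

section Aux
namespace WeightedGraph

variable {V : Type*} (G : WeightedGraph V)

lemma muPos (x : V) : 0 < G.mu x := G.mu_pos x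

lemma w_le_mu (x y : V) : G.w x y ≤ G.mu x :=
  Summable.le_tsum (G.summable' x) y (fun z _ => G.nonneg x z)

lemma P_nonneg (x y : V) : 0 ≤ G.P x y := div_nonneg (G.nonneg x y) (G.muPos x).le

lemma P_le_one (x y : V) : G.P x y ≤ 1 :=
  div_le_one_of_le₀ (G.w_le_mu x y) (G.muPos x).le

lemma summable_P (x : V) : Summable (G.P x) := (G.summable' x).div_const _

lemma tsum_P (x : V) : ∑' y, G.P x y = 1 := by
  unfold P
  rw [tsum_div_const]
  exact div_self (G.muPos x).ne'

lemma P_pos_iff {x y : V} : 0 < G.P x y ↔ 0 < G.w x y := by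
  constructor
  · intro h
    rcases lt_or_eq_of_le (G.nonneg x y) with h' | h'
    · exact h'
    · exfalso; unfold P at h; rw [← h'] at h; simp at h
  · intro h
    exact div_pos h (G.muPos x)

lemma P_eq_zero_of_w {x y : V} (h : ¬ 0 < G.w x y) : G.P x y = 0 := by
  unfold P
  have : G.w x y = 0 := le_antisymm (not_lt.mp h) (G.nonneg x y)
  rw [this, zero_div]

-- walkLen lemmas
lemma walkLen_zero {x y : V} : G.walkLen 0 x y ↔ x = y := Iff.rfl

lemma walkLen_succ {n : ℕ} {x y : V} :
    G.walkLen (n+1) x y ↔ ∃ z, 0 < G.w x z ∧ G.walkLen n z y := Iff.rfl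

lemma walkLen_trans : ∀ {a : ℕ} {b : ℕ} {x y z : V},
    G.walkLen a x y → G.walkLen b y z → G.walkLen (a + b) x z := by
  intro a
  induction a with
  | zero => intro b x y z h1 h2; rw [walkLen_zero] at h1; subst h1; simpa using h2
  | succ n ih =>
    intro b x y z h1 h2
    obtain ⟨u, hu, hw⟩ := h1
    have : G.walkLen (n + b) u z := ih hw h2
    have : G.walkLen ((n + b) + 1) x z := ⟨u, hu, this⟩
    simpa [Nat.succ_add] using this

lemma walkLen_snoc : ∀ {a : ℕ} {x y z : V},
    G.walkLen a x y → 0 < G.w y z → G.walkLen (a+1) x z := by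
  intro a
  induction a with
  | zero => intro x y z h1 h2; rw [walkLen_zero] at h1; subst h1; exact ⟨z, h2, rfl⟩
  | succ n ih =>
    intro x y z h1 h2
    obtain ⟨u, hu, hw⟩ := h1
    exact ⟨u, hu, ih hw h2⟩

lemma walkLen_symm : ∀ {a : ℕ} {x y : V}, G.walkLen a x y → G.walkLen a y x := by
  intro a
  induction a with
  | zero => intro x y h; exact h.symm
  | succ n ih =>
    intro x y h
    obtain ⟨u, hu, hw⟩ := h
    have hw' := ih hw
    have : 0 < G.w u x := by rw [G.symm]; exact hu
    exact G.walkLen_snoc hw' this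

lemma exists_walkLen (x y : V) : ∃ n, G.walkLen n x y := by
  have h := G.connected x y
  induction h with
  | refl => exact ⟨0, rfl⟩
  | tail _ hbc ih => obtain ⟨n, hn⟩ := ih; exact ⟨n+1, G.walkLen_snoc hn hbc⟩

lemma walkLen_dist (x y : V) : G.walkLen (G.dist x y) x y :=
  Nat.sInf_mem (G.exists_walkLen x y)

lemma dist_le {n : ℕ} {x y : V} (h : G.walkLen n x y) : G.dist x y ≤ n :=
  Nat.sInf_le h

lemma dist_self (x : V) : G.dist x x = 0 :=
  Nat.le_zero.mp (G.dist_le (rfl : G.walkLen 0 x x))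

lemma dist_symm (x y : V) : G.dist x y = G.dist y x :=
  le_antisymm (G.dist_le (G.walkLen_symm (G.walkLen_dist y x)))
    (G.dist_le (G.walkLen_symm (G.walkLen_dist x y)))

lemma dist_triangle (x y z : V) : G.dist x z ≤ G.dist x y + G.dist y z :=
  G.dist_le (G.walkLen_trans (G.walkLen_dist x y) (G.walkLen_dist y z))

lemma dist_eq_zero {x y : V} (h : G.dist x y = 0) : x = y := by
  have := G.walkLen_dist x y
  rw [h] at this
  exact this

lemma dist_le_one {x y : V} (h : 0 < G.w x y) : G.dist x y ≤ 1 :=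
  G.dist_le (⟨y, h, rfl⟩ : G.walkLen 1 x y)

end WeightedGraph
end Aux
section Aux2
namespace WeightedGraph

variable {V : Type*} (G : WeightedGraph V)

lemma Pn_zero (x y : V) : G.Pn 0 x y = if x = y then 1 else 0 := rfl

lemma Pn_succ (n : ℕ) (x y : V) : G.Pn (n+1) x y = ∑' z, G.P x z * G.Pn n z y := rfl

lemma Pn_nonneg (n : ℕ) (x y : V) : 0 ≤ G.Pn n x y := by
  induction n generalizing x y with
  | zero => rw [Pn_zero]; positivity
  | succ m ih =>
    rw [Pn_succ]
    exact tsum_nonneg fun z => mul_nonneg (G.P_nonneg x z) (ih z y)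

lemma Pn_dist_le {n : ℕ} {x y : V} (h : G.Pn n x y ≠ 0) : G.dist x y ≤ n := by
  induction n generalizing x with
  | zero =>
    rw [Pn_zero] at h
    by_cases hxy : x = y
    · subst hxy; simp [G.dist_self]
    · simp [hxy] at h
  | succ m ih =>
    rw [Pn_succ] at h
    have : ∃ z, G.P x z * G.Pn m z y ≠ 0 := by
      by_contra hc
      push_neg at hc
      apply h
      simp only [hc]
      exact tsum_zero
    obtain ⟨z, hz⟩ := this
    have hP : G.P x z ≠ 0 := fun h0 => hz (by rw [h0, zero_mul])
    have hPn : G.Pn m z y ≠ 0 := fun h0 => hz (by rw [h0, mul_zero])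
    have hw : 0 < G.w x z := G.P_pos_iff.mp (lt_of_le_of_ne (G.P_nonneg x z) (Ne.symm hP))
    calc G.dist x y ≤ G.dist x z + G.dist z y := G.dist_triangle x z y
      _ ≤ 1 + m := add_le_add (G.dist_le_one hw) (ih hPn)
      _ = m + 1 := by omega

lemma Pn_eq_zero_of_far {n : ℕ} {x y : V} (h : n < G.dist x y) : G.Pn n x y = 0 := by
  by_contra hc
  exact absurd (G.Pn_dist_le hc) (by omega)

-- finiteness of balls under (p₀)
lemma nbr_finite (hp0 : G.condP0) (x : V) : {y | 0 < G.w x y}.Finite := by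
  obtain ⟨p₀, hp, h⟩ := hp0
  by_contra hinf
  replace hinf : {y | 0 < G.w x y}.Infinite := hinf
  obtain ⟨t, hts, htc⟩ := hinf.exists_subset_card_eq (⌊1/p₀⌋₊ + 1)
  have hsum : ∑ y ∈ t, G.w x y ≤ G.mu x := Summable.sum_le_tsum t (fun z _ => G.nonneg x z) (G.summable' x)
  have hlow : ∀ y ∈ t, p₀ * G.mu x ≤ G.w x y := by
    intro y hy
    have hw : 0 < G.w x y := hts hy
    have := h x y hw
    calc p₀ * G.mu x ≤ (G.w x y / G.mu x) * G.mu x := by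
          apply mul_le_mul_of_nonneg_right this (G.muPos x).le
      _ = G.w x y := div_mul_cancel₀ _ (G.muPos x).ne'
  have hcard : (t.card : ℝ) * (p₀ * G.mu x) ≤ ∑ y ∈ t, G.w x y := by
    calc (t.card : ℝ) * (p₀ * G.mu x) = ∑ _y ∈ t, p₀ * G.mu x := by
          rw [Finset.sum_const, nsmul_eq_mul]
      _ ≤ ∑ y ∈ t, G.w x y := Finset.sum_le_sum hlow
  have h1 : (t.card : ℝ) * p₀ ≤ 1 := by
    have := hcard.trans hsum
    nlinarith [G.muPos x]
  have h2 : (1:ℝ) < (t.card : ℝ) * p₀ := by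
    rw [htc]
    push_cast
    have : 1/p₀ < (⌊1/p₀⌋₊ : ℝ) + 1 := Nat.lt_floor_add_one _
    calc (1:ℝ) = (1/p₀) * p₀ := by field_simp
      _ < ((⌊1/p₀⌋₊ : ℝ) + 1) * p₀ := by apply mul_lt_mul_of_pos_right this hp
  linarith

lemma walkLen_init : ∀ {k : ℕ} {x y : V}, G.walkLen (k+1) x y →
    ∃ z, G.walkLen k x z ∧ 0 < G.w z y := by
  intro k
  induction k with
  | zero =>
    intro x y h
    obtain ⟨z, hz, hw⟩ := h
    rw [walkLen_zero] at hw
    subst hw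
    exact ⟨x, rfl, hz⟩
  | succ m ih =>
    intro x y h
    obtain ⟨u, hu, hw⟩ := h
    obtain ⟨z, hz, hzy⟩ := ih hw
    exact ⟨z, ⟨u, hu, hz⟩, hzy⟩

lemma ball_finite (hp0 : G.condP0) (x : V) (R : ℕ) : (G.ball x R).Finite := by
  induction R with
  | zero =>
    convert Set.finite_empty
    ext y
    simp [ball]
  | succ R ih =>
    have hsub : G.ball x (R+1) ⊆ ({x} : Set V) ∪ G.ball x R ∪
        ⋃ z ∈ G.ball x R, {y | 0 < G.w z y} := by
      intro y hy
      have hd : G.dist x y < R + 1 := hy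
      rcases Nat.eq_zero_or_pos (G.dist x y) with h0 | hpos
      · left; left; exact (G.dist_eq_zero h0).symm
      · obtain ⟨k, hk⟩ := Nat.exists_eq_add_of_lt hpos
        -- dist = k + 1? hk : dist = 0 + k + 1
        have hk' : G.dist x y = k + 1 := by omega
        have hw : G.walkLen (k+1) x y := by rw [← hk']; exact G.walkLen_dist x y
        obtain ⟨z, hz, hzy⟩ := G.walkLen_init hw
        have hzball : z ∈ G.ball x R := by
          have : G.dist x z ≤ k := G.dist_le hz
          have : G.dist x z < R := by omega
          exact this
        right
        exact Set.mem_biUnion hzball hzy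
    apply Set.Finite.subset _ hsub
    apply Set.Finite.union
    · exact (Set.finite_singleton x).union ih
    · exact Set.Finite.biUnion ih (fun z _ => G.nbr_finite hp0 z)

end WeightedGraph
end Aux2
section Aux3
namespace WeightedGraph

variable {V : Type*} (G : WeightedGraph V)

lemma Pn_vanish (hp0 : G.condP0) (n : ℕ) (x : V) :
    ∀ y ∉ (G.ball_finite hp0 x (n+1)).toFinset, G.Pn n x y = 0 := by
  intro y hy
  apply G.Pn_eq_zero_of_far
  rw [Set.Finite.mem_toFinset] at hy
  have : ¬ G.dist x y < n + 1 := hy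
  omega

lemma summable_Pn (hp0 : G.condP0) (n : ℕ) (x : V) : Summable (G.Pn n x) :=
  summable_of_ne_finset_zero (G.Pn_vanish hp0 n x)

lemma tsum_Pn_eq_sum (hp0 : G.condP0) (n : ℕ) (x : V) {s : Finset V}
    (hs : (G.ball_finite hp0 x (n+1)).toFinset ⊆ s) :
    ∑' y, G.Pn n x y = ∑ y ∈ s, G.Pn n x y := by
  apply tsum_eq_sum
  intro y hy
  exact G.Pn_vanish hp0 n x y (fun h => hy (hs h))

lemma P_vanish (hp0 : G.condP0) (x : V) :
    ∀ y ∉ (G.ball_finite hp0 x 2).toFinset, G.P x y = 0 := by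
  intro y hy
  rw [Set.Finite.mem_toFinset] at hy
  apply G.P_eq_zero_of_w
  intro hw
  exact hy (lt_of_le_of_lt (G.dist_le_one hw) one_lt_two)

-- total mass
lemma tsum_Pn_one (hp0 : G.condP0) (n : ℕ) (x : V) : ∑' y, G.Pn n x y = 1 := by
  induction n generalizing x with
  | zero =>
    rw [show (fun y => G.Pn 0 x y) = fun y => if y = x then 1 else 0 by
      ext y; rw [Pn_zero]; by_cases h : x = y <;> simp [h, eq_comm]]
    exact tsum_ite_eq x 1
  | succ m ih =>
    classical
    set s1 := (G.ball_finite hp0 x 2).toFinset with hs1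
    set B2 := (G.ball_finite hp0 x (m+2)).toFinset with hB2
    have hsupp : ∀ y ∉ B2, G.Pn (m+1) x y = 0 := G.Pn_vanish hp0 (m+1) x
    have hconv : ∑' y, G.Pn (m+1) x y = ∑ y ∈ B2, G.Pn (m+1) x y := tsum_eq_sum hsupp
    rw [hconv]
    have hinner : ∀ y, G.Pn (m+1) x y = ∑ z ∈ s1, G.P x z * G.Pn m z y := by
      intro y
      rw [Pn_succ]
      apply tsum_eq_sum
      intro z hz
      rw [G.P_vanish hp0 x z hz, zero_mul]
    simp only [hinner]
    rw [Finset.sum_comm]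
    have hrow : ∀ z ∈ s1, ∑ y ∈ B2, G.P x z * G.Pn m z y = G.P x z := by
      intro z hz
      rw [← Finset.mul_sum]
      have : ∑ y ∈ B2, G.Pn m z y = 1 := by
        rw [← ih z]
        symm
        apply tsum_eq_sum
        intro y hy
        apply G.Pn_eq_zero_of_far
        by_contra hc
        push_neg at hc
        apply hy
        rw [hB2, Set.Finite.mem_toFinset]
        have hz' : G.dist x z < 2 := by rw [hs1, Set.Finite.mem_toFinset] at hz; exact hz
        calc G.dist x y ≤ G.dist x z + G.dist z y := G.dist_triangle x z y
          _ < m + 2 := by omega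
      rw [this, mul_one]
    rw [Finset.sum_congr rfl hrow]
    rw [← (tsum_eq_sum (G.P_vanish hp0 x) : ∑' y, G.P x y = _)]
    exact G.tsum_P x

-- Chapman-Kolmogorov
lemma Pn_add (hp0 : G.condP0) (a b : ℕ) (x y : V) :
    G.Pn (a + b) x y = ∑' z, G.Pn a x z * G.Pn b z y := by
  induction a generalizing x with
  | zero =>
    rw [show (0 + b) = b by omega]
    have h0 : ∑' z, G.Pn 0 x z * G.Pn b z y = G.Pn 0 x x * G.Pn b x y :=
      tsum_eq_single x (fun z hz => by rw [Pn_zero, if_neg (fun h => hz h.symm), zero_mul])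
    rw [h0, Pn_zero, if_pos rfl, one_mul]
  | succ m ih =>
    classical
    set s1 := (G.ball_finite hp0 x 2).toFinset with hs1
    set t := (G.ball_finite hp0 x (m+2)).toFinset with ht
    have hstep : G.Pn (m + 1 + b) x y = ∑' w, G.P x w * G.Pn (m + b) w y := by
      rw [show m + 1 + b = (m + b) + 1 by omega, Pn_succ]
    rw [hstep]
    have h1 : ∑' w, G.P x w * G.Pn (m + b) w y
        = ∑ w ∈ s1, G.P x w * G.Pn (m+b) w y := by
      apply tsum_eq_sum
      intro w hw
      rw [G.P_vanish hp0 x w hw, zero_mul]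
    rw [h1]
    have h2 : ∀ w ∈ s1, G.P x w * G.Pn (m+b) w y
        = ∑ z ∈ t, G.P x w * (G.Pn m w z * G.Pn b z y) := by
      intro w hw
      rw [ih w, ← Finset.mul_sum]
      congr 1
      apply tsum_eq_sum
      intro z hz
      have : G.Pn m w z = 0 := by
        apply G.Pn_eq_zero_of_far
        by_contra hc
        push_neg at hc
        apply hz
        rw [ht, Set.Finite.mem_toFinset]
        have hw' : G.dist x w < 2 := by rw [hs1, Set.Finite.mem_toFinset] at hw; exact hw
        calc G.dist x z ≤ G.dist x w + G.dist w z := G.dist_triangle x w z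
          _ < m + 2 := by omega
      rw [this, zero_mul]
    rw [Finset.sum_congr rfl h2, Finset.sum_comm]
    have h3 : ∀ z ∈ t, ∑ w ∈ s1, G.P x w * (G.Pn m w z * G.Pn b z y)
        = G.Pn (m+1) x z * G.Pn b z y := by
      intro z _
      have : ∑ w ∈ s1, G.P x w * (G.Pn m w z * G.Pn b z y)
          = (∑ w ∈ s1, G.P x w * G.Pn m w z) * G.Pn b z y := by
        rw [Finset.sum_mul]
        congr 1; ext w; ring
      rw [this]
      congr 1
      rw [Pn_succ]
      symm
      apply tsum_eq_sum
      intro w hw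
      rw [G.P_vanish hp0 x w hw, zero_mul]
    rw [Finset.sum_congr rfl h3]
    symm
    apply tsum_eq_sum
    intro z hz
    have : G.Pn (m+1) x z = 0 := by
      apply G.Pn_eq_zero_of_far
      by_contra hc
      push_neg at hc
      apply hz
      rw [ht, Set.Finite.mem_toFinset]
      show G.dist x z < m + 2
      omega
    rw [this, zero_mul]

lemma Pn_one (x y : V) : G.Pn 1 x y = G.P x y := by
  rw [Pn_succ]
  have h0 : ∑' z, G.P x z * G.Pn 0 z y = G.P x y * G.Pn 0 y y :=
    tsum_eq_single y (fun z hz => by rw [Pn_zero, if_neg hz, mul_zero])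
  rw [h0, Pn_zero, if_pos rfl, mul_one]

-- reversibility
lemma Pn_reverse (hp0 : G.condP0) (n : ℕ) (x y : V) :
    G.mu x * G.Pn n x y = G.mu y * G.Pn n y x := by
  induction n generalizing x y with
  | zero =>
    rw [Pn_zero, Pn_zero]
    by_cases h : x = y
    · subst h; simp
    · rw [if_neg h, if_neg (fun h' => h h'.symm)]; simp
  | succ m ih =>
    classical
    set s := (G.ball_finite hp0 x (m+2)).toFinset with hs
    have hL : G.Pn (m+1) x y = ∑ z ∈ s, G.Pn m x z * G.P z y := by
      rw [show m + 1 = m + 1 by rfl, G.Pn_add hp0 m 1]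
      simp only [Pn_one]
      apply tsum_eq_sum
      intro z hz
      have : G.Pn m x z = 0 := by
        apply G.Pn_eq_zero_of_far
        by_contra hc
        push_neg at hc
        exact hz (by rw [hs, Set.Finite.mem_toFinset]; show G.dist x z < m + 2; omega)
      rw [this, zero_mul]
    have hR : G.Pn (m+1) y x = ∑ z ∈ s, G.P y z * G.Pn m z x := by
      rw [Pn_succ]
      apply tsum_eq_sum
      intro z hz
      have : G.Pn m z x = 0 := by
        apply G.Pn_eq_zero_of_far
        by_contra hc
        push_neg at hc
        apply hz
        rw [hs, Set.Finite.mem_toFinset]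
        show G.dist x z < m + 2
        have hzx : G.dist x z = G.dist z x := G.dist_symm x z
        omega
      rw [this, mul_zero]
    rw [hL, hR, Finset.mul_sum, Finset.mul_sum]
    apply Finset.sum_congr rfl
    intro z _
    have h1 : G.mu x * (G.Pn m x z * G.P z y) = (G.mu x * G.Pn m x z) * G.P z y := by ring
    rw [h1, ih x z]
    have hz' : G.mu z ≠ 0 := (G.muPos z).ne'
    have hy' : G.mu y ≠ 0 := (G.muPos y).ne'
    unfold P
    rw [G.symm z y]
    field_simp

end WeightedGraph
end Aux3
section Aux4
namespace WeightedGraph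

variable {V : Type*} (G : WeightedGraph V)

lemma survive_zero (B : Set V) (x : V) :
    G.survive B 0 x = if x ∈ B then 1 else 0 := rfl

lemma survive_succ (B : Set V) (n : ℕ) (x : V) :
    G.survive B (n+1) x = if x ∈ B then ∑' y, G.P x y * G.survive B n y else 0 := rfl

lemma survive_nonneg (B : Set V) (n : ℕ) (x : V) : 0 ≤ G.survive B n x := by
  induction n generalizing x with
  | zero => rw [survive_zero]; positivity
  | succ m ih =>
    rw [survive_succ]
    by_cases h : x ∈ B
    · rw [if_pos h]
      exact tsum_nonneg fun y => mul_nonneg (G.P_nonneg x y) (ih y)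
    · rw [if_neg h]

lemma survive_le_one (B : Set V) (n : ℕ) (x : V) : G.survive B n x ≤ 1 := by
  induction n generalizing x with
  | zero => rw [survive_zero]; split <;> norm_num
  | succ m ih =>
    rw [survive_succ]
    by_cases h : x ∈ B
    · rw [if_pos h]
      calc ∑' y, G.P x y * G.survive B m y ≤ ∑' y, G.P x y := by
            apply Summable.tsum_le_tsum _ _ (G.summable_P x)
            · intro y
              calc G.P x y * G.survive B m y ≤ G.P x y * 1 :=
                    mul_le_mul_of_nonneg_left (ih y) (G.P_nonneg x y)
                _ = G.P x y := mul_one _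
            · apply Summable.of_nonneg_of_le
                (fun y => mul_nonneg (G.P_nonneg x y) (G.survive_nonneg B m y))
                (fun y => by
                  calc G.P x y * G.survive B m y ≤ G.P x y * 1 :=
                        mul_le_mul_of_nonneg_left (ih y) (G.P_nonneg x y)
                    _ = G.P x y := mul_one _)
                (G.summable_P x)
        _ = 1 := G.tsum_P x
    · rw [if_neg h]; norm_num

lemma summable_survive_mul (B : Set V) (n : ℕ) (x : V) :
    Summable (fun y => G.P x y * G.survive B n y) :=
  Summable.of_nonneg_of_le
    (fun y => mul_nonneg (G.P_nonneg x y) (G.survive_nonneg B n y))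
    (fun y => by
      calc G.P x y * G.survive B n y ≤ G.P x y * 1 :=
            mul_le_mul_of_nonneg_left (G.survive_le_one B n y) (G.P_nonneg x y)
        _ = G.P x y := mul_one _)
    (G.summable_P x)

lemma survive_not_mem {B : Set V} {x : V} (h : x ∉ B) (n : ℕ) : G.survive B n x = 0 := by
  cases n with
  | zero => rw [survive_zero, if_neg h]
  | succ m => rw [survive_succ, if_neg h]

lemma survive_mono_set {B B' : Set V} (hBB : B ⊆ B') (n : ℕ) (x : V) :
    G.survive B n x ≤ G.survive B' n x := by
  induction n generalizing x with
  | zero =>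
    rw [survive_zero, survive_zero]
    by_cases h : x ∈ B
    · rw [if_pos h, if_pos (hBB h)]
    · rw [if_neg h]; split <;> norm_num
  | succ m ih =>
    rw [survive_succ, survive_succ]
    by_cases h : x ∈ B
    · rw [if_pos h, if_pos (hBB h)]
      apply Summable.tsum_le_tsum _ (G.summable_survive_mul B m x) (G.summable_survive_mul B' m x)
      intro y
      exact mul_le_mul_of_nonneg_left (ih y) (G.P_nonneg x y)
    · rw [if_neg h]
      split
      · exact tsum_nonneg fun y => mul_nonneg (G.P_nonneg x y) (G.survive_nonneg B' m y)
      · exact le_refl 0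

lemma survive_anti (B : Set V) (n : ℕ) (x : V) :
    G.survive B (n+1) x ≤ G.survive B n x := by
  induction n generalizing x with
  | zero =>
    rw [survive_succ, survive_zero]
    by_cases h : x ∈ B
    · rw [if_pos h, if_pos h]
      calc ∑' y, G.P x y * G.survive B 0 y ≤ ∑' y, G.P x y := by
            apply Summable.tsum_le_tsum _ (G.summable_survive_mul B 0 x) (G.summable_P x)
            intro y
            calc G.P x y * G.survive B 0 y ≤ G.P x y * 1 :=
                  mul_le_mul_of_nonneg_left (G.survive_le_one B 0 y) (G.P_nonneg x y)
              _ = G.P x y := mul_one _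
        _ = 1 := G.tsum_P x
    · rw [if_neg h, if_neg h]
  | succ m ih =>
    rw [survive_succ, survive_succ]
    by_cases h : x ∈ B
    · rw [if_pos h, if_pos h]
      apply Summable.tsum_le_tsum _ (G.summable_survive_mul B (m+1) x) (G.summable_survive_mul B m x)
      intro y
      exact mul_le_mul_of_nonneg_left (ih y) (G.P_nonneg x y)
    · rw [if_neg h, if_neg h]

lemma survive_anti_le (B : Set V) {m n : ℕ} (h : m ≤ n) (x : V) :
    G.survive B n x ≤ G.survive B m x := by
  induction n with
  | zero =>
    have : m = 0 := Nat.le_zero.mp h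
    subst this
    exact le_refl _
  | succ k ih =>
    rcases Nat.lt_or_ge m (k+1) with h' | h'
    · exact le_trans (G.survive_anti B k x) (ih (by omega))
    · have : m = k + 1 := by omega
      subst this
      exact le_refl _

end WeightedGraph
end Aux4
section Aux5
namespace WeightedGraph

variable {V : Type*} (G : WeightedGraph V)

/-- Submultiplicativity of survival probability. -/
lemma survive_add_le (B : Set V) (b : ℕ) (S : ℝ) (hS0 : 0 ≤ S)
    (hS : ∀ z ∈ B, G.survive B b z ≤ S) :
    ∀ (a : ℕ) (x : V), G.survive B (a + b) x ≤ S * G.survive B a x := by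
  intro a
  induction a with
  | zero =>
    intro x
    by_cases h : x ∈ B
    · rw [survive_zero, if_pos h, mul_one, Nat.zero_add]
      exact hS x h
    · rw [G.survive_not_mem h, G.survive_not_mem h, mul_zero]
  | succ m ih =>
    intro x
    by_cases h : x ∈ B
    · rw [show m + 1 + b = (m + b) + 1 by omega, survive_succ, if_pos h,
        survive_succ, if_pos h]
      calc ∑' y, G.P x y * G.survive B (m + b) y
          ≤ ∑' y, G.P x y * (S * G.survive B m y) := by
            have hsum2 : Summable (fun y => G.P x y * (S * G.survive B m y)) := by
              have heq : (fun y => G.P x y * (S * G.survive B m y))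
                  = fun y => S * (G.P x y * G.survive B m y) := by ext y; ring
              rw [heq]
              exact (G.summable_survive_mul B m x).mul_left S
            exact Summable.tsum_le_tsum
              (fun y => mul_le_mul_of_nonneg_left (ih y) (G.P_nonneg x y))
              (G.summable_survive_mul B (m+b) x) hsum2
        _ = S * ∑' y, G.P x y * G.survive B m y := by
            rw [← tsum_mul_left]
            congr 1; ext y; ring
    · rw [G.survive_not_mem h, G.survive_not_mem h, mul_zero]

/-- If there is a walk of length `ℓ` from `z` to a point outside `B`, then the
survival probability after `ℓ` steps is at most `1 - p₀^ℓ`. -/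
lemma survive_escape {p₀ : ℝ} (hp : 0 < p₀) (hp1 : p₀ ≤ 1)
    (hP : ∀ x y : V, 0 < G.w x y → p₀ ≤ G.P x y)
    (B : Set V) :
    ∀ (ℓ : ℕ) (z y : V), G.walkLen ℓ z y → y ∉ B → G.survive B ℓ z ≤ 1 - p₀ ^ ℓ := by
  intro ℓ
  induction ℓ with
  | zero =>
    intro z y hw hy
    rw [walkLen_zero] at hw
    subst hw
    rw [G.survive_not_mem hy, pow_zero]
    norm_num
  | succ m ih =>
    intro z y hw hy
    have hple : p₀ ^ (m+1) ≤ 1 := pow_le_one₀ hp.le hp1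
    by_cases hz : z ∈ B
    · obtain ⟨v, hv, hwv⟩ := hw
      have hPzv : p₀ ≤ G.P z v := hP z v hv
      have hsv : G.survive B m v ≤ 1 - p₀ ^ m := ih v y hwv hy
      rw [survive_succ, if_pos hz]
      have hsummf := G.summable_survive_mul B m z
      have hsummg := G.summable_P z
      rw [Summable.tsum_eq_add_tsum_ite hsummf v]
      have hg : ∑' (u : V), (if u = v then 0 else G.P z u) = 1 - G.P z v := by
        have := Summable.tsum_eq_add_tsum_ite hsummg v
        rw [G.tsum_P z] at this
        linarith
      have hle : ∑' (u : V), (if u = v then 0 else G.P z u * G.survive B m u)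
          ≤ ∑' (u : V), (if u = v then 0 else G.P z u) := by
        apply Summable.tsum_le_tsum
        · intro u
          split
          · exact le_refl 0
          · calc G.P z u * G.survive B m u ≤ G.P z u * 1 :=
                  mul_le_mul_of_nonneg_left (G.survive_le_one B m u) (G.P_nonneg z u)
              _ = G.P z u := mul_one _
        · apply Summable.of_nonneg_of_le _ _ hsummf
          · intro u; split
            · exact le_refl 0
            · exact mul_nonneg (G.P_nonneg z u) (G.survive_nonneg B m u)
          · intro u; split
            · exact mul_nonneg (G.P_nonneg z u) (G.survive_nonneg B m u)
            · exact le_refl _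
        · apply Summable.of_nonneg_of_le _ _ hsummg
          · intro u; split
            · exact le_refl 0
            · exact G.P_nonneg z u
          · intro u; split
            · exact G.P_nonneg z u
            · exact le_refl _
      have hmain : G.P z v * G.survive B m v ≤ G.P z v * (1 - p₀ ^ m) :=
        mul_le_mul_of_nonneg_left hsv (G.P_nonneg z v)
      have hp0m : (0:ℝ) ≤ p₀ ^ m := pow_nonneg hp.le m
      have : G.P z v * p₀ ^ m ≥ p₀ * p₀ ^ m := mul_le_mul_of_nonneg_right hPzv hp0m
      calc G.P z v * G.survive B m v
            + ∑' (u : V), (if u = v then 0 else G.P z u * G.survive B m u)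
          ≤ G.P z v * (1 - p₀ ^ m) + (1 - G.P z v) := by
            rw [hg] at hle; linarith
        _ = 1 - G.P z v * p₀ ^ m := by ring
        _ ≤ 1 - p₀ ^ (m + 1) := by rw [pow_succ']; linarith
    · rw [G.survive_not_mem hz]
      linarith

/-- partial sums of `θ^{n/m}` are bounded -/
lemma geom_div_summable {θ : ℝ} (h0 : 0 ≤ θ) (h1 : θ < 1) (m : ℕ) (hm : 1 ≤ m) :
    Summable (fun n : ℕ => θ ^ (n / m)) := by
  have hsummg : Summable (fun k : ℕ => θ ^ k) := summable_geometric_of_lt_one h0 h1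
  have hgeom : ∀ N : ℕ, ∑ k ∈ Finset.range N, θ ^ k ≤ (1 - θ)⁻¹ := by
    intro N
    calc ∑ k ∈ Finset.range N, θ ^ k ≤ ∑' k : ℕ, θ ^ k :=
          Summable.sum_le_tsum (Finset.range N) (fun i _ => by positivity) hsummg
      _ = (1 - θ)⁻¹ := tsum_geometric_of_lt_one h0 h1
  apply summable_of_sum_range_le (c := (m : ℝ) * (1 - θ)⁻¹)
  · intro n; positivity
  · intro N
    have hsub : ∑ n ∈ Finset.range N, θ ^ (n / m) ≤ ∑ n ∈ Finset.range (m * N), θ ^ (n / m) := by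
      apply Finset.sum_le_sum_of_subset_of_nonneg
      · apply Finset.range_subset_range.mpr
        calc N = 1 * N := (one_mul N).symm
          _ ≤ m * N := Nat.mul_le_mul_right N hm
      · intro i _ _; positivity
    have hblock : ∀ N : ℕ, ∑ n ∈ Finset.range (m * N), θ ^ (n / m)
        = (m : ℝ) * ∑ k ∈ Finset.range N, θ ^ k := by
      intro N
      induction N with
      | zero => simp
      | succ K ihK =>
        rw [Nat.mul_succ, Finset.sum_range_add, ihK, Finset.sum_range_succ]
        have : ∀ i ∈ Finset.range m, θ ^ ((m * K + i) / m) = θ ^ K := by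
          intro i hi
          rw [Finset.mem_range] at hi
          congr 1
          rw [Nat.mul_add_div (by omega), Nat.div_eq_of_lt hi, Nat.add_zero]
        rw [Finset.sum_congr rfl this, Finset.sum_const, Finset.card_range, nsmul_eq_mul]
        ring
    calc ∑ n ∈ Finset.range N, θ ^ (n / m)
        ≤ ∑ n ∈ Finset.range (m * N), θ ^ (n / m) := hsub
      _ = (m : ℝ) * ∑ k ∈ Finset.range N, θ ^ k := hblock N
      _ ≤ (m : ℝ) * (1 - θ)⁻¹ := by
          apply mul_le_mul_of_nonneg_left (hgeom N) (by positivity)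

end WeightedGraph
end Aux5
section Aux6
namespace WeightedGraph

variable {V : Type*} (G : WeightedGraph V)

lemma summable_survive [Infinite V] {p₀ : ℝ} (hp : 0 < p₀) (hp1 : p₀ ≤ 1)
    (hP : ∀ x y : V, 0 < G.w x y → p₀ ≤ G.P x y)
    (B : Set V) (hB : B.Finite) (x : V) :
    Summable (fun n => G.survive B n x) := by
  rcases B.eq_empty_or_nonempty with hemp | hne
  · subst hemp
    have : (fun n => G.survive (∅ : Set V) n x) = fun _ => (0:ℝ) := by
      ext n
      exact G.survive_not_mem (Set.notMem_empty x) n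
    rw [this]
    exact summable_zero
  · have hesc : ∀ z : V, ∃ ℓ : ℕ, ∃ y, G.walkLen ℓ z y ∧ y ∉ B := by
      intro z
      have : Bᶜ.Nonempty := (Set.Finite.infinite_compl hB).nonempty
      obtain ⟨y, hy⟩ := this
      obtain ⟨ℓ, hℓ⟩ := G.exists_walkLen z y
      exact ⟨ℓ, y, hℓ, hy⟩
    choose ℓ yy hwalk hyy using hesc
    classical
    set m := hB.toFinset.sup ℓ with hmdef
    have hℓm : ∀ z ∈ B, ℓ z ≤ m := by
      intro z hz
      exact Finset.le_sup (hB.mem_toFinset.mpr hz)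
    have hm1 : 1 ≤ m := by
      obtain ⟨z, hz⟩ := hne
      have hz1 : 1 ≤ ℓ z := by
        by_contra hc
        have h0 : ℓ z = 0 := by omega
        have := hwalk z
        rw [h0, walkLen_zero] at this
        exact hyy z (this ▸ hz)
      exact le_trans hz1 (hℓm z hz)
    set θ := 1 - p₀ ^ m with hθdef
    have hθ0 : 0 ≤ θ := by
      have : p₀ ^ m ≤ 1 := pow_le_one₀ hp.le hp1
      simp [hθdef]; linarith
    have hθ1 : θ < 1 := by
      have : 0 < p₀ ^ m := pow_pos hp m
      simp only [hθdef]; linarith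
    have hSm : ∀ z ∈ B, G.survive B m z ≤ θ := by
      intro z hz
      calc G.survive B m z ≤ G.survive B (ℓ z) z := G.survive_anti_le B (hℓm z hz) z
        _ ≤ 1 - p₀ ^ (ℓ z) := G.survive_escape hp hp1 hP B (ℓ z) z (yy z) (hwalk z) (hyy z)
        _ ≤ θ := by
            have : p₀ ^ m ≤ p₀ ^ (ℓ z) := pow_le_pow_of_le_one hp.le hp1 (hℓm z hz)
            simp only [hθdef]; linarith
    have hgeo : ∀ (k : ℕ) (z : V), G.survive B (k * m) z ≤ θ ^ k := by
      intro k
      induction k with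
      | zero => intro z; simpa using G.survive_le_one B 0 z
      | succ j ih =>
        intro z
        have h1 : G.survive B (j * m + m) z ≤ θ * G.survive B (j * m) z :=
          G.survive_add_le B m θ hθ0 hSm (j * m) z
        calc G.survive B ((j+1) * m) z = G.survive B (j * m + m) z := by
              rw [show (j+1) * m = j * m + m by ring]
          _ ≤ θ * G.survive B (j * m) z := h1
          _ ≤ θ * θ ^ j := mul_le_mul_of_nonneg_left (ih z) hθ0
          _ = θ ^ (j+1) := by rw [pow_succ]; ring
    have hbound : ∀ n : ℕ, G.survive B n x ≤ θ ^ (n / m) := by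
      intro n
      calc G.survive B n x ≤ G.survive B ((n / m) * m) x :=
            G.survive_anti_le B (Nat.div_mul_le_self n m) x
        _ ≤ θ ^ (n / m) := hgeo (n / m) x
    exact Summable.of_nonneg_of_le (fun n => G.survive_nonneg B n x) hbound
      (geom_div_summable hθ0 hθ1 m hm1)

lemma ball_zero (x : V) : G.ball x 0 = ∅ := by
  ext y; simp [ball]

lemma meanExit_zero (x : V) : G.meanExit x 0 = 0 := by
  unfold meanExit
  rw [G.ball_zero]
  have : (fun n => G.survive (∅ : Set V) n x) = fun _ => (0:ℝ) := by
    ext n; exact G.survive_not_mem (Set.notMem_empty x) n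
  rw [this, tsum_zero]

lemma mem_ball_self {x : V} {R : ℕ} (hR : 0 < R) : x ∈ G.ball x R := by
  show G.dist x x < R
  rw [G.dist_self]; exact hR

lemma survive_one_of_close (x : V) (R : ℕ) :
    ∀ (j : ℕ) (z : V), G.dist x z + j < R → G.survive (G.ball x R) j z = 1 := by
  intro j
  induction j with
  | zero =>
    intro z hz
    rw [survive_zero, if_pos]
    show G.dist x z < R
    omega
  | succ k ih =>
    intro z hz
    have hzB : z ∈ G.ball x R := by show G.dist x z < R; omega
    rw [survive_succ, if_pos hzB]
    have hterm : ∀ y, G.P z y * G.survive (G.ball x R) k y = G.P z y := by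
      intro y
      by_cases hw : 0 < G.w z y
      · have hdy : G.dist x y ≤ G.dist x z + 1 :=
          le_trans (G.dist_triangle x z y) (by have := G.dist_le_one hw; omega)
        rw [ih y (by omega), mul_one]
      · rw [G.P_eq_zero_of_w hw, zero_mul]
    rw [tsum_congr hterm]
    exact G.tsum_P z

lemma le_meanExit [Infinite V] {p₀ : ℝ} (hp : 0 < p₀) (hp1 : p₀ ≤ 1)
    (hP : ∀ x y : V, 0 < G.w x y → p₀ ≤ G.P x y) (hp0 : G.condP0)
    (x : V) (R : ℕ) : (R : ℝ) ≤ G.meanExit x R := by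
  have hsum := G.summable_survive hp hp1 hP (G.ball x R) (G.ball_finite hp0 x R) x
  have h1 : ∀ j ∈ Finset.range R, G.survive (G.ball x R) j x = 1 := by
    intro j hj
    rw [Finset.mem_range] at hj
    apply G.survive_one_of_close x R j x
    rw [G.dist_self]
    omega
  calc (R : ℝ) = ∑ j ∈ Finset.range R, G.survive (G.ball x R) j x := by
        rw [Finset.sum_congr rfl h1, Finset.sum_const, Finset.card_range, nsmul_eq_mul, mul_one]
    _ ≤ ∑' j, G.survive (G.ball x R) j x :=
        Summable.sum_le_tsum (Finset.range R) (fun j _ => G.survive_nonneg _ j x) hsum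
    _ = G.meanExit x R := rfl

/-- Tail estimate for the exit time series. -/
lemma tsum_survive_tail_le (B : Set V) (hB : B.Finite) (M : ℝ)
    (hs : ∀ z : V, Summable (fun j => G.survive B j z))
    (hM : ∀ z : V, ∑' j, G.survive B j z ≤ M) :
    ∀ (a : ℕ) (x : V), ∑' j, G.survive B (a + j) x ≤ G.survive B a x * M := by
  classical
  intro a
  induction a with
  | zero =>
    intro x
    by_cases h : x ∈ B
    · rw [survive_zero, if_pos h, one_mul]
      simpa using hM x
    · have : ∀ j : ℕ, G.survive B (0 + j) x = 0 := fun j => G.survive_not_mem h _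
      rw [tsum_congr this, tsum_zero, G.survive_not_mem h, zero_mul]
  | succ m ih =>
    intro x
    by_cases h : x ∈ B
    · have hM0 : 0 ≤ M := le_trans (G.survive_nonneg B 0 x) (le_trans
        (Summable.le_tsum (hs x) 0 (fun j _ => G.survive_nonneg B j x)) (hM x))
      set s := hB.toFinset with hsdef
      have hterm : ∀ j : ℕ, G.survive B (m + 1 + j) x
          = ∑ y ∈ s, G.P x y * G.survive B (m + j) y := by
        intro j
        rw [show m + 1 + j = (m + j) + 1 by omega, survive_succ, if_pos h]
        apply tsum_eq_sum
        intro y hy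
        have hyB : y ∉ B := fun hc => hy (hB.mem_toFinset.mpr hc)
        rw [G.survive_not_mem hyB, mul_zero]
      rw [tsum_congr hterm]
      have hsummj : ∀ y ∈ s, Summable (fun j => G.P x y * G.survive B (m + j) y) := by
        intro y _
        apply Summable.mul_left
        have : Summable (fun j => G.survive B (j + m) y) := (summable_nat_add_iff m).mpr (hs y)
        have heq : (fun j => G.survive B (m + j) y) = fun j => G.survive B (j + m) y := by
          ext j; rw [add_comm]
        rw [heq]
        exact this
      rw [Summable.tsum_finsetSum hsummj]
      have hy_le : ∀ y ∈ s, ∑' j, G.P x y * G.survive B (m + j) y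
          ≤ G.P x y * G.survive B m y * M := by
        intro y hy
        rw [tsum_mul_left]
        calc G.P x y * ∑' j, G.survive B (m + j) y
            ≤ G.P x y * (G.survive B m y * M) := by
              apply mul_le_mul_of_nonneg_left (ih y) (G.P_nonneg x y)
          _ = G.P x y * G.survive B m y * M := by ring
      calc ∑ y ∈ s, ∑' j, G.P x y * G.survive B (m + j) y
          ≤ ∑ y ∈ s, G.P x y * G.survive B m y * M := Finset.sum_le_sum hy_le
        _ = (∑ y ∈ s, G.P x y * G.survive B m y) * M := by rw [Finset.sum_mul]
        _ = G.survive B (m+1) x * M := by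
            congr 1
            rw [survive_succ, if_pos h]
            symm
            apply tsum_eq_sum
            intro y hy
            have hyB : y ∉ B := fun hc => hy (hB.mem_toFinset.mpr hc)
            rw [G.survive_not_mem hyB, mul_zero]
    · have : ∀ j : ℕ, G.survive B (m + 1 + j) x = 0 := fun j => G.survive_not_mem h _
      rw [tsum_congr this, tsum_zero, G.survive_not_mem h, zero_mul]

/-- The survival probability is dominated by the heat mass remaining in `B`. -/
lemma survive_le_tsum_Pn (hp0 : G.condP0) (B : Set V) :
    ∀ (n : ℕ) (x : V), G.survive B n x ≤ ∑' y, G.Pn n x y * (if y ∈ B then 1 else 0) := by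
  classical
  intro n
  induction n with
  | zero =>
    intro x
    by_cases h : x ∈ B
    · rw [survive_zero, if_pos h]
      have : ∑' y, G.Pn 0 x y * (if y ∈ B then 1 else 0)
          = G.Pn 0 x x * (if x ∈ B then 1 else 0) := by
        apply tsum_eq_single x
        intro z hz
        rw [Pn_zero, if_neg (fun hc => hz hc.symm), zero_mul]
      rw [this, Pn_zero, if_pos rfl, if_pos h, mul_one]
    · rw [survive_zero, if_neg h]
      exact tsum_nonneg fun y => mul_nonneg (G.Pn_nonneg 0 x y) (by positivity)
  | succ m ih =>
    intro x
    by_cases h : x ∈ B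
    swap
    · rw [G.survive_not_mem h]
      exact tsum_nonneg fun y => mul_nonneg (G.Pn_nonneg _ x y) (by positivity)
    rw [survive_succ, if_pos h]
    set s1 := (G.ball_finite hp0 x 2).toFinset with hs1
    set t := (G.ball_finite hp0 x (m+2)).toFinset with ht
    have hhle : ∀ y : V, ∑' z, G.Pn m y z * (if z ∈ B then 1 else 0) ≤ 1 := by
      intro y
      calc ∑' z, G.Pn m y z * (if z ∈ B then 1 else 0) ≤ ∑' z, G.Pn m y z := by
            apply Summable.tsum_le_tsum _ _ (G.summable_Pn hp0 m y)
            · intro z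
              by_cases hz : z ∈ B
              · rw [if_pos hz, mul_one]
              · rw [if_neg hz, mul_zero]; exact G.Pn_nonneg m y z
            · apply Summable.of_nonneg_of_le _ _ (G.summable_Pn hp0 m y)
              · intro z; exact mul_nonneg (G.Pn_nonneg m y z) (by positivity)
              · intro z
                by_cases hz : z ∈ B
                · rw [if_pos hz, mul_one]
                · rw [if_neg hz, mul_zero]; exact G.Pn_nonneg m y z
        _ = 1 := G.tsum_Pn_one hp0 m y
    have hhnn : ∀ y : V, 0 ≤ ∑' z, G.Pn m y z * (if z ∈ B then 1 else 0) := by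
      intro y
      exact tsum_nonneg fun z => mul_nonneg (G.Pn_nonneg m y z) (by positivity)
    have step1 : ∑' y, G.P x y * G.survive B m y
        ≤ ∑' y, G.P x y * (∑' z, G.Pn m y z * (if z ∈ B then 1 else 0)) := by
      have hsum2 : Summable (fun y => G.P x y * (∑' z, G.Pn m y z * (if z ∈ B then 1 else 0))) := by
        apply Summable.of_nonneg_of_le _ _ (G.summable_P x)
        · intro y; exact mul_nonneg (G.P_nonneg x y) (hhnn y)
        · intro y
          calc G.P x y * (∑' z, G.Pn m y z * (if z ∈ B then 1 else 0))
              ≤ G.P x y * 1 := mul_le_mul_of_nonneg_left (hhle y) (G.P_nonneg x y)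
            _ = G.P x y := mul_one _
      exact Summable.tsum_le_tsum
        (fun y => mul_le_mul_of_nonneg_left (ih y) (G.P_nonneg x y))
        (G.summable_survive_mul B m x) hsum2
    refine le_trans step1 (le_of_eq ?_)
    -- now an exact Fubini computation
    have e1 : ∑' y, G.P x y * (∑' z, G.Pn m y z * (if z ∈ B then 1 else 0))
        = ∑ y ∈ s1, G.P x y * (∑ z ∈ t, G.Pn m y z * (if z ∈ B then 1 else 0)) := by
      have conv1 : ∑' y, G.P x y * (∑' z, G.Pn m y z * (if z ∈ B then 1 else 0))
          = ∑ y ∈ s1, G.P x y * (∑' z, G.Pn m y z * (if z ∈ B then 1 else 0)) := by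
        apply tsum_eq_sum
        intro y hy
        rw [G.P_vanish hp0 x y hy, zero_mul]
      rw [conv1]
      apply Finset.sum_congr rfl
      intro y hy
      congr 1
      apply tsum_eq_sum
      intro z hz
      have : G.Pn m y z = 0 := by
        apply G.Pn_eq_zero_of_far
        by_contra hc
        push_neg at hc
        apply hz
        rw [ht, Set.Finite.mem_toFinset]
        show G.dist x z < m + 2
        have hy' : G.dist x y < 2 := by rw [hs1, Set.Finite.mem_toFinset] at hy; exact hy
        have := G.dist_triangle x y z
        omega
      rw [this, zero_mul]
    rw [e1]
    have e2 : ∑ y ∈ s1, G.P x y * (∑ z ∈ t, G.Pn m y z * (if z ∈ B then 1 else 0))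
        = ∑ z ∈ t, G.Pn (m+1) x z * (if z ∈ B then 1 else 0) := by
      simp only [Finset.mul_sum]
      rw [Finset.sum_comm]
      apply Finset.sum_congr rfl
      intro z _
      have : ∑ y ∈ s1, G.P x y * (G.Pn m y z * (if z ∈ B then 1 else 0))
          = (∑ y ∈ s1, G.P x y * G.Pn m y z) * (if z ∈ B then 1 else 0) := by
        rw [Finset.sum_mul]
        apply Finset.sum_congr rfl
        intro y _
        ring
      rw [this]
      congr 1
      rw [Pn_succ]
      symm
      apply tsum_eq_sum
      intro y hy
      rw [G.P_vanish hp0 x y hy, zero_mul]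
    rw [e2]
    symm
    apply tsum_eq_sum
    intro z hz
    have : G.Pn (m+1) x z = 0 := by
      apply G.Pn_eq_zero_of_far
      by_contra hc
      push_neg at hc
      apply hz
      rw [ht, Set.Finite.mem_toFinset]
      show G.dist x z < m + 2
      omega
    rw [this, zero_mul]

end WeightedGraph
end Aux6
section Aux7
namespace WeightedGraph

variable {V : Type*} (G : WeightedGraph V)

lemma exists_neighbor (x : V) : ∃ y, 0 < G.w x y := by
  by_contra hc
  push_neg at hc
  have : ∀ y, G.w x y = 0 := fun y => le_antisymm (hc y) (G.nonneg x y)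
  have h0 : G.mu x = 0 := by
    unfold mu
    rw [tsum_congr this, tsum_zero]
  exact absurd h0 (G.muPos x).ne'

end WeightedGraph
end Aux7

open WeightedGraph in
/-- Under `(p₀)`, `(VC)` and `(TC)` there is `c > 0` such that
`p_{2n}(x,x) ≥ c / V(x, e(x,2n))` for all `x` and `n ≥ 1`. -/
theorem diag_lower_estimate {V : Type*} [Countable V] [Infinite V] (G : WeightedGraph V)
    (hp0 : G.condP0) (hvc : G.condVC) (htc : G.condTC) :
    ∃ c > (0 : ℝ), ∀ (x : V) (n : ℕ), 1 ≤ n →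
      c / G.vol x (G.einv x (2 * n)) ≤ G.hk (2 * n) x x := by
    classical
  obtain ⟨p₀, hp, hPb⟩ := id hp0
  obtain ⟨CT, hCT1, hTC⟩ := htc
  have hCT0 : (0:ℝ) < CT := lt_trans one_pos hCT1
  refine ⟨1 / (4 * CT ^ 2), by positivity, ?_⟩
  intro x n hn
  -- basic p₀ facts
  have hP' : ∀ a b : V, 0 < G.w a b → p₀ ≤ G.P a b := hPb
  have hp1 : p₀ ≤ 1 := by
    obtain ⟨y, hy⟩ := G.exists_neighbor x
    exact le_trans (hP' x y hy) (G.P_le_one x y)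
  set N := 2 * n with hN
  -- the radius
  set R := G.einv x N with hRdef
  have hSne : (N : ℕ) ∈ {r : ℕ | (N : ℝ) ≤ G.meanExit x r} :=
    G.le_meanExit hp hp1 hP' hp0 x N
  have hmem : (N : ℝ) ≤ G.meanExit x R := Nat.sInf_mem (Set.nonempty_of_mem hSne)
  have hR1 : 1 ≤ R := by
    by_contra hc
    have hR0 : R = 0 := by omega
    rw [hR0, G.meanExit_zero] at hmem
    have hn1 : (1:ℝ) ≤ (n:ℝ) := by exact_mod_cast hn
    have : (2:ℝ) ≤ (N:ℝ) := by
      rw [hN]; push_cast; linarith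
    linarith
  set B := G.ball x R with hBdef
  have hBfin : B.Finite := G.ball_finite hp0 x R
  have hsumm : ∀ (A : Set V), A.Finite → ∀ z, Summable (fun j => G.survive A j z) :=
    fun A hA z => G.summable_survive hp hp1 hP' A hA z
  set E₀ := G.meanExit x R with hE₀def
  have hE₀N : (N : ℝ) ≤ E₀ := hmem
  have hE₀pos : (0:ℝ) < E₀ := by
    have hn1 : (1:ℝ) ≤ (n:ℝ) := by exact_mod_cast hn
    have : (1:ℝ) ≤ (N:ℝ) := by rw [hN]; push_cast; linarith
    linarith
  -- bound on exit times from within the ball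
  have hM : ∀ z : V, ∑' j, G.survive B j z ≤ CT * E₀ := by
    intro z
    by_cases hz : z ∈ B
    · have hzx : G.dist z x < R := by
        have : G.dist x z < R := hz
        rw [G.dist_symm] at this
        exact this
      have hsub : B ⊆ G.ball z (2 * R) := by
        intro y hy
        have h1 : G.dist x y < R := hy
        show G.dist z y < 2 * R
        calc G.dist z y ≤ G.dist z x + G.dist x y := G.dist_triangle z x y
          _ < 2 * R := by omega
      have hb2 : (G.ball z (2 * R)).Finite := G.ball_finite hp0 z (2 * R)
      calc ∑' j, G.survive B j z ≤ ∑' j, G.survive (G.ball z (2 * R)) j z :=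
            Summable.tsum_le_tsum (fun j => G.survive_mono_set hsub j z)
              (hsumm B hBfin z) (hsumm _ hb2 z)
        _ = G.meanExit z (2 * R) := rfl
        _ ≤ CT * G.meanExit x R := hTC z R (by omega) x hzx
        _ = CT * E₀ := rfl
    · have : ∀ j : ℕ, G.survive B j z = 0 := fun j => G.survive_not_mem hz j
      rw [tsum_congr this, tsum_zero]
      positivity
  -- survival lower bound
  have hsplit : (∑ i ∈ Finset.range n, G.survive B i x)
      + ∑' i, G.survive B (i + n) x = E₀ := Summable.sum_add_tsum_nat_add n (hsumm B hBfin x)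
  have htail : ∑' i, G.survive B (i + n) x ≤ G.survive B n x * (CT * E₀) := by
    have heq : (fun i => G.survive B (i + n) x) = fun i => G.survive B (n + i) x := by
      ext i; rw [add_comm]
    rw [heq]
    exact G.tsum_survive_tail_le B hBfin (CT * E₀) (hsumm B hBfin) hM n x
  have hhead : (∑ i ∈ Finset.range n, G.survive B i x) ≤ n := by
    calc (∑ i ∈ Finset.range n, G.survive B i x) ≤ ∑ _i ∈ Finset.range n, (1:ℝ) :=
          Finset.sum_le_sum (fun i _ => G.survive_le_one B i x)
      _ = n := by rw [Finset.sum_const, Finset.card_range, nsmul_eq_mul, mul_one]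
  have h2nE : 2 * (n:ℝ) ≤ E₀ := by
    have : ((N:ℕ):ℝ) = 2 * (n:ℝ) := by rw [hN]; push_cast; ring
    linarith [hE₀N, this.ge]
  have hE₀sv : E₀ ≤ n + G.survive B n x * (CT * E₀) := by linarith
  have hsurv_lb : 1 / (2 * CT) ≤ G.survive B n x := by
    rw [div_le_iff₀ (by positivity)]
    nlinarith [hE₀pos, G.survive_nonneg B n x]
  -- CS setup
  set T := hBfin.toFinset with hT
  set s2 := (G.ball_finite hp0 x (n+1)).toFinset with hs2
  set T' := T ∩ s2 with hT'
  have hxT' : x ∈ T' := by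
    rw [hT', Finset.mem_inter]
    constructor
    · rw [hT, Set.Finite.mem_toFinset]
      exact G.mem_ball_self (by omega)
    · rw [hs2, Set.Finite.mem_toFinset]
      show G.dist x x < n + 1
      rw [G.dist_self]; omega
  -- survival vs heat mass
  have hsurv_sum : G.survive B n x ≤ ∑ y ∈ T', G.Pn n x y := by
    have h1 := G.survive_le_tsum_Pn hp0 B n x
    have h2 : ∑' y, G.Pn n x y * (if y ∈ B then 1 else 0)
        = ∑ y ∈ T, G.Pn n x y * (if y ∈ B then 1 else 0) := by
      apply tsum_eq_sum
      intro y hy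
      have : y ∉ B := fun hc => hy (hBfin.mem_toFinset.mpr hc)
      rw [if_neg this, mul_zero]
    have h3 : ∑ y ∈ T, G.Pn n x y * (if y ∈ B then 1 else 0) = ∑ y ∈ T, G.Pn n x y := by
      apply Finset.sum_congr rfl
      intro y hy
      rw [hT, Set.Finite.mem_toFinset] at hy
      rw [if_pos hy, mul_one]
    have h4 : ∑ y ∈ T, G.Pn n x y = ∑ y ∈ T', G.Pn n x y := by
      symm
      apply Finset.sum_subset (Finset.inter_subset_left)
      intro y _ hy2
      by_cases hys : y ∈ s2
      · exfalso; exact hy2 (Finset.mem_inter.mpr ⟨by assumption, hys⟩)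
      · apply G.Pn_eq_zero_of_far
        rw [hs2, Set.Finite.mem_toFinset] at hys
        have : ¬ G.dist x y < n + 1 := hys
        omega
    rw [h2, h3, h4] at h1
    exact h1
  -- volume
  have hvol_eq : G.vol x R = ∑ y ∈ T, G.mu y := by
    unfold vol muSet
    rw [tsum_subtype]
    have hconv : ∑' (y : V), (G.ball x R).indicator G.mu y
        = ∑ y ∈ T, (G.ball x R).indicator G.mu y :=
      tsum_eq_sum (fun y hy =>
        Set.indicator_of_notMem (fun hc => hy (hBfin.mem_toFinset.mpr hc)) G.mu)
    rw [hconv]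
    apply Finset.sum_congr rfl
    intro y hy
    exact Set.indicator_of_mem (hBfin.mem_toFinset.mp hy) G.mu
  have hvol_T' : ∑ y ∈ T', G.mu y ≤ G.vol x R := by
    rw [hvol_eq]
    apply Finset.sum_le_sum_of_subset_of_nonneg (Finset.inter_subset_left)
    intro y _ _
    exact (G.muPos y).le
  have hvol_T'pos : 0 < ∑ y ∈ T', G.mu y :=
    lt_of_lt_of_le (G.muPos x) (Finset.single_le_sum (fun y _ => (G.muPos y).le) hxT')
  have hvolpos : 0 < G.vol x R := lt_of_lt_of_le hvol_T'pos hvol_T'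
  -- the diagonal bound
  set Q := ∑ y ∈ T', G.Pn n x y ^ 2 / G.mu y with hQ
  have hCS : (∑ y ∈ T', G.Pn n x y) ^ 2 / (∑ y ∈ T', G.mu y) ≤ Q :=
    Finset.sq_sum_div_le_sum_sq_div T' (fun y => G.Pn n x y) (fun y _ => G.muPos y)
  have hPnN : G.mu x * Q ≤ G.Pn N x x := by
    have h1 : G.Pn N x x = ∑' y, G.Pn n x y * G.Pn n y x := by
      rw [hN, two_mul]
      exact G.Pn_add hp0 n n x x
    have h2 : ∑' y, G.Pn n x y * G.Pn n y x = ∑ y ∈ s2, G.Pn n x y * G.Pn n y x := by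
      apply tsum_eq_sum
      intro y hy
      have : G.Pn n x y = 0 := by
        apply G.Pn_eq_zero_of_far
        rw [hs2, Set.Finite.mem_toFinset] at hy
        have : ¬ G.dist x y < n + 1 := hy
        omega
      rw [this, zero_mul]
    have h3 : ∀ y, G.Pn n x y * G.Pn n y x = G.mu x * (G.Pn n x y ^ 2 / G.mu y) := by
      intro y
      have hrev := G.Pn_reverse hp0 n y x
      have hy' : G.mu y ≠ 0 := (G.muPos y).ne'
      have : G.Pn n y x = G.mu x * G.Pn n x y / G.mu y := by
        field_simp
        linarith [hrev]
      rw [this]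
      field_simp
    calc G.mu x * Q = ∑ y ∈ T', G.mu x * (G.Pn n x y ^ 2 / G.mu y) := by
          rw [hQ, Finset.mul_sum]
      _ = ∑ y ∈ T', G.Pn n x y * G.Pn n y x := by
          apply Finset.sum_congr rfl
          intro y _
          rw [h3 y]
      _ ≤ ∑ y ∈ s2, G.Pn n x y * G.Pn n y x := by
          apply Finset.sum_le_sum_of_subset_of_nonneg (Finset.inter_subset_right)
          intro y _ _
          rw [h3 y]
          exact mul_nonneg (G.muPos x).le (div_nonneg (sq_nonneg _) (G.muPos y).le)
      _ = G.Pn N x x := by rw [h1, h2]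
  -- put everything together
  have hQ_lb : (1 / (4 * CT ^ 2)) / G.vol x R ≤ Q := by
    have hs_lb : 1 / (2 * CT) ≤ ∑ y ∈ T', G.Pn n x y := le_trans hsurv_lb hsurv_sum
    have hsq : (1 / (2 * CT)) ^ 2 ≤ (∑ y ∈ T', G.Pn n x y) ^ 2 :=
      pow_le_pow_left₀ (by positivity) hs_lb 2
    have he : (1 / (2 * CT)) ^ 2 = 1 / (4 * CT ^ 2) := by field_simp; ring
    calc (1 / (4 * CT ^ 2)) / G.vol x R ≤ (1 / (4 * CT ^ 2)) / (∑ y ∈ T', G.mu y) := by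
          apply div_le_div_of_nonneg_left (by positivity) hvol_T'pos hvol_T'
      _ = (1 / (2 * CT)) ^ 2 / (∑ y ∈ T', G.mu y) := by rw [he]
      _ ≤ (∑ y ∈ T', G.Pn n x y) ^ 2 / (∑ y ∈ T', G.mu y) :=
          (div_le_div_iff_of_pos_right hvol_T'pos).mpr hsq
      _ ≤ Q := hCS
  have hQ_le_hk : Q ≤ G.hk N x x := by
    unfold hk
    rw [le_div_iff₀ (G.muPos x)]
    nlinarith [hPnN]
  exact le_trans hQ_lb hQ_le_hk
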